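/- Every open neighborhood of the identity element [e_x] in π₁^qtop(X,x) contains the entire SG subgroup π₁^sg(X,x); consequently π₁^sg(X,x) ⊆ closure({[e_x]}). -/

import Mathlib

open CategoryTheory FundamentalGroup

attribute [local instance] Path.Homotopic.setoid

noncomputable section

/-- A loop `β` based at `y` is a *small loop* if it is homotopic (rel endpoints) to a loop
contained in every open neighborhood of `y`. -/
def IsSmallLoop {X : TopCat} {y : X} (β : Path y y) : Prop :=
  ∀ U : Set X, IsOpen U → y ∈ U →
    ∃ β' : Path y y, (∀ t, β' t ∈ U) ∧ Path.Homotopic β β'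

/-- The small loop group `π₁ˢ(X, x)`: the set of homotopy classes of small loops at `x`. -/
def smallLoopSet {X : TopCat} (x : X) : Set (FundamentalGroup X x) :=
  {g | ∃ β : Path x x, IsSmallLoop β ∧ g = fromPath ⟦β⟧}

/-- The SG subgroup `π₁ˢᵍ(X, x)`: generated by conjugates of small loop classes along paths. -/
def sgSubgroup {X : TopCat} (x : X) : Subgroup (FundamentalGroup X x) :=
  Subgroup.closure {g | ∃ (y : X) (α : Path x y) (β : Path y y),
    IsSmallLoop β ∧ g = fromPath ⟦α.trans (β.trans α.symm)⟧}

/-- The quotient topology on the fundamental group, coinduced from the loop space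
(with the compact-open topology). -/
def qtop {X : TopCat} (x : X) : TopologicalSpace (FundamentalGroup X x) :=
  TopologicalSpace.coinduced (fun β : Path x x => fromPath ⟦β⟧) inferInstance

section Aux

variable {X : TopCat} {x : X}

lemma myFromPath_trans (p q : Path x x) :
    fromPath ⟦p.trans q⟧ = fromPath ⟦q⟧ * fromPath ⟦p⟧ := by
  show (⟦p.trans q⟧ : Path.Homotopic.Quotient x x) = Path.Homotopic.Quotient.trans ⟦p⟧ ⟦q⟧
  rfl

lemma myFromPath_symm (p : Path x x) :
    fromPath ⟦p.symm⟧ = (fromPath ⟦p⟧)⁻¹ := by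
  rfl

lemma myOne_def : (1 : FundamentalGroup X x) = fromPath ⟦Path.refl x⟧ := by
  rfl

lemma myFromPath_toPath (g : FundamentalGroup X x) : fromPath (toPath g) = g := by
  rfl

lemma cont_q : @Continuous (Path x x) _ _ (qtop x) (fun γ : Path x x => fromPath ⟦γ⟧) :=
  continuous_coinduced_rng

lemma cont_mulRight (h : FundamentalGroup X x) :
    @Continuous _ _ (qtop x) (qtop x) (fun g => g * h) := by
  letI := qtop x
  obtain ⟨δ, hδ⟩ := Quotient.exists_rep (toPath h)
  have hh : fromPath ⟦δ⟧ = h := by rw [hδ, myFromPath_toPath]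
  rw [qtop, continuous_coinduced_dom]
  have : ((fun g => g * h) ∘ fun γ : Path x x => fromPath ⟦γ⟧) =
      (fun γ : Path x x => fromPath ⟦γ⟧) ∘ (fun γ : Path x x => δ.trans γ) := by
    funext γ
    simp only [Function.comp_apply, myFromPath_trans, hh]
  rw [this]
  exact cont_q.comp (Path.continuous_trans.comp (continuous_const.prodMk continuous_id))

lemma cont_inv : @Continuous _ _ (qtop x) (qtop x) (fun g : FundamentalGroup X x => g⁻¹) := by
  letI := qtop x
  rw [qtop, continuous_coinduced_dom]
  have : ((fun g : FundamentalGroup X x => g⁻¹) ∘ fun γ : Path x x => fromPath ⟦γ⟧) =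
      (fun γ : Path x x => fromPath ⟦γ⟧) ∘ (fun γ : Path x x => γ.symm) := by
    funext γ
    simp only [Function.comp_apply, myFromPath_symm]
  rw [this]
  exact cont_q.comp Path.continuous_symm

variable {y : X}

lemma gamma0_mid (α : Path x y) (t : unitInterval) (h1 : (1:ℝ)/2 ≤ t) (h2 : (t:ℝ) ≤ 3/4) :
    (α.trans ((Path.refl y).trans α.symm)) t = y := by
  rw [Path.trans_apply]
  split_ifs with h
  · have ht : (t : ℝ) = 1/2 := le_antisymm (by linarith) h1
    rw [← α.extend_apply, show 2 * (t:ℝ) = 1 by rw [ht]; norm_num, α.extend_one]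
  · rw [Path.trans_apply]
    split_ifs with h'
    · simp
    · exfalso
      push_neg at h'
      simp only at h'
      norm_num at h'
      linarith

lemma conj_cases (α : Path x y) (β : Path y y) (t : unitInterval) :
    ((1:ℝ)/2 ≤ t ∧ (t:ℝ) ≤ 3/4 ∧
      ((α.trans (β.trans α.symm)) t = y ∨ ∃ s, (α.trans (β.trans α.symm)) t = β s))
    ∨ ∀ β₂ : Path y y, (α.trans (β.trans α.symm)) t = (α.trans (β₂.trans α.symm)) t := by
  by_cases h1 : (t : ℝ) ≤ 1/2
  · by_cases h2 : (1:ℝ)/2 ≤ t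
    · left
      refine ⟨h2, by linarith, Or.inl ?_⟩
      rw [Path.trans_apply, dif_pos h1]
      have ht : (t : ℝ) = 1/2 := le_antisymm h1 h2
      rw [← α.extend_apply, show 2 * (t:ℝ) = 1 by rw [ht]; norm_num, α.extend_one]
    · right
      intro β₂
      rw [Path.trans_apply, Path.trans_apply, dif_pos h1, dif_pos h1]
  · by_cases h2 : (2 * (t:ℝ) - 1) ≤ 1/2
    · left
      push_neg at h1
      refine ⟨h1.le, by linarith, Or.inr ?_⟩
      rw [Path.trans_apply, dif_neg (not_le.mpr h1), Path.trans_apply]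
      rw [dif_pos (by exact h2)]
      exact ⟨_, rfl⟩
    · right
      intro β₂
      rw [Path.trans_apply, Path.trans_apply, dif_neg h1, dif_neg h1,
        Path.trans_apply, Path.trans_apply, dif_neg (by exact h2), dif_neg (by exact h2)]

/-- Every generator of the SG subgroup lies in every open neighborhood of `1`. -/
lemma generator_mem (α : Path x y) (β : Path y y) (hβ : IsSmallLoop β)
    (U : Set (FundamentalGroup X x)) (hU : @IsOpen _ (qtop x) U)
    (h1 : (1 : FundamentalGroup X x) ∈ U) :
    fromPath ⟦α.trans (β.trans α.symm)⟧ ∈ U := by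
  classical
  rw [qtop, isOpen_coinduced] at hU
  -- V is the set of loops whose class lies in U; it is open and contains γ₀
  set q : Path x x → FundamentalGroup X x := fun γ => fromPath ⟦γ⟧ with hq
  set γ0 : Path x x := α.trans ((Path.refl y).trans α.symm) with hγ0
  have hγ0_one : q γ0 = 1 := by
    have hA : Path.Homotopic γ0 (α.trans α.symm) :=
      Path.Homotopic.hcomp (Path.Homotopic.refl α) ⟨Path.Homotopy.reflTrans α.symm⟩
    have hB : Path.Homotopic (α.trans α.symm) (Path.refl x) :=
      ⟨(Path.Homotopy.reflTransSymm α).symm⟩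
    show fromPath ⟦γ0⟧ = 1
    rw [myOne_def]
    exact congrArg fromPath (Quotient.sound (hA.trans hB))
  have hγ0V : γ0 ∈ q ⁻¹' U := by
    show q γ0 ∈ U
    rw [hγ0_one]; exact h1
  -- extract a basic compact-open neighborhood
  obtain ⟨W, hWopen, hWV⟩ := isOpen_induced_iff.mp hU
  have hγ0W : (γ0 : C(unitInterval, X)) ∈ W := by
    rw [← Set.mem_preimage, hWV]; exact hγ0V
  have hbasis := TopologicalSpace.isTopologicalBasis_of_subbasis
    (ContinuousMap.compactOpen_eq (X := unitInterval) (Y := X))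
  obtain ⟨B, hBmem, hγ0B, hBW⟩ := hbasis.exists_subset_of_mem_open hγ0W hWopen
  obtain ⟨F, ⟨hFfin, hFsub⟩, rfl⟩ := hBmem
  -- choose compact/open data for each member of F
  have hchoice : ∀ s : Set C(unitInterval, X), ∃ (K : Set unitInterval) (O : Set X),
      s ∈ F → IsCompact K ∧ IsOpen O ∧ s = {f : C(unitInterval, X) | Set.MapsTo f K O} := by
    intro s
    by_cases hs : s ∈ F
    · obtain ⟨K, hK, O, hO, heq⟩ := Set.mem_image2.mp (hFsub hs)
      exact ⟨K, O, fun _ => ⟨hK, hO, heq.symm⟩⟩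
    · exact ⟨∅, ∅, fun h => absurd h hs⟩
  choose K O hKO using hchoice
  have hγ0maps : ∀ s ∈ F, Set.MapsTo (γ0 : C(unitInterval, X)) (K s) (O s) := by
    intro s hs
    have := hγ0B s hs
    rwa [(hKO s hs).2.2] at this
  -- the small neighborhood of y
  set mid : Set unitInterval := {t | (1:ℝ)/2 ≤ t ∧ (t:ℝ) ≤ 3/4} with hmid
  set Ofin : Set X := ⋂ s ∈ F, (if (K s ∩ mid).Nonempty then O s else Set.univ) with hOfin
  have hOfin_open : IsOpen Ofin :=
    hFfin.isOpen_biInter fun s hs => by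
      split_ifs
      · exact (hKO s hs).2.1
      · exact isOpen_univ
  have hyO : y ∈ Ofin := by
    refine Set.mem_iInter₂.mpr fun s hs => ?_
    split_ifs with hne
    · obtain ⟨t, htK, htm⟩ := hne
      have : (γ0 : C(unitInterval, X)) t = y := gamma0_mid α t htm.1 htm.2
      rw [← this]
      exact hγ0maps s hs htK
    · trivial
  -- get the small representative
  obtain ⟨β', hβ'O, hβ'hom⟩ := hβ Ofin hOfin_open hyO
  set γ' : Path x x := α.trans (β'.trans α.symm) with hγ'
  -- γ' lies in every member of F
  have hγ'B : (γ' : C(unitInterval, X)) ∈ ⋂₀ F := by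
    intro s hs
    rw [(hKO s hs).2.2]
    intro t htK
    rcases conj_cases α β' t with ⟨hm1, hm2, hval⟩ | heq
    · have hmem : γ' t ∈ Ofin := by
        rcases hval with h | ⟨s', hs'⟩
        · rw [h]; exact hyO
        · rw [hs']; exact hβ'O s'
      have hsub : Ofin ⊆ O s := by
        have : Ofin ⊆ (if (K s ∩ mid).Nonempty then O s else Set.univ) :=
          Set.biInter_subset_of_mem hs
        rwa [if_pos ⟨t, htK, hm1, hm2⟩] at this
      exact hsub hmem
    · show γ' t ∈ O s
      rw [heq (Path.refl y)]
      exact hγ0maps s hs htK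
  have hγ'U : q γ' ∈ U := by
    have : (γ' : C(unitInterval, X)) ∈ W := hBW hγ'B
    have : γ' ∈ q ⁻¹' U := by rw [← hWV]; exact this
    exact this
  have : (⟦α.trans (β.trans α.symm)⟧ : Path.Homotopic.Quotient x x) = ⟦γ'⟧ :=
    Quotient.sound (Path.Homotopic.hcomp (Path.Homotopic.refl α)
      (Path.Homotopic.hcomp hβ'hom (Path.Homotopic.refl α.symm)))
  show fromPath ⟦α.trans (β.trans α.symm)⟧ ∈ U
  rw [this]
  exact hγ'U

end Aux

/-- Every open neighborhood of the identity in `π₁ᑫᵗᵒᵖ(X, x)` contains the SG subgroup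
`π₁ˢᵍ(X, x)`; consequently `π₁ˢᵍ(X, x) ⊆ closure {1}`. -/
theorem sgSubgroup_subset_nhds_one {X : TopCat} (x : X) :
    (∀ U : Set (FundamentalGroup X x), @IsOpen _ (qtop x) U →
        (1 : FundamentalGroup X x) ∈ U → (sgSubgroup x : Set (FundamentalGroup X x)) ⊆ U) ∧
      (sgSubgroup x : Set (FundamentalGroup X x)) ⊆
        @closure _ (qtop x) {(1 : FundamentalGroup X x)} := by
  letI := qtop x
  have main : ∀ g ∈ sgSubgroup x, ∀ U : Set (FundamentalGroup X x),
      @IsOpen _ (qtop x) U → (1 : FundamentalGroup X x) ∈ U → g ∈ U := by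
    intro g hg
    refine Subgroup.closure_induction
      (p := fun g _ => ∀ U : Set (FundamentalGroup X x),
        @IsOpen _ (qtop x) U → (1 : FundamentalGroup X x) ∈ U → g ∈ U)
      ?_ ?_ ?_ ?_ hg
    · rintro g ⟨y, α, β, hβ, rfl⟩ U hU h1
      exact generator_mem α β hβ U hU h1
    · intro U _ h1
      exact h1
    · intro a b _ _ ha hb U hU h1
      have hcont := cont_mulRight (x := x) b
      have hU' : @IsOpen _ (qtop x) ((fun g => g * b) ⁻¹' U) := hU.preimage hcont
      have h1' : (1 : FundamentalGroup X x) ∈ (fun g => g * b) ⁻¹' U := by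
        show (1 : FundamentalGroup X x) * b ∈ U
        rw [one_mul]
        exact hb U hU h1
      exact ha _ hU' h1'
    · intro a _ ha U hU h1
      have hU' : @IsOpen _ (qtop x) ((fun g : FundamentalGroup X x => g⁻¹) ⁻¹' U) :=
        hU.preimage cont_inv
      have h1' : (1 : FundamentalGroup X x) ∈ (fun g : FundamentalGroup X x => g⁻¹) ⁻¹' U := by
        show (1 : FundamentalGroup X x)⁻¹ ∈ U
        rw [inv_one]
        exact h1
      exact ha _ hU' h1'
  refine ⟨fun U hU h1 g hg => main g hg U hU h1, ?_⟩
  intro g hg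
  letI := qtop x
  rw [mem_closure_iff]
  intro o ho hgo
  have hcont := cont_mulRight (x := x) g
  have ho' : @IsOpen _ (qtop x) ((fun k => k * g) ⁻¹' o) := ho.preimage hcont
  have h1' : (1 : FundamentalGroup X x) ∈ (fun k => k * g) ⁻¹' o := by
    show (1 : FundamentalGroup X x) * g ∈ o
    rw [one_mul]
    exact hgo
  have hginv : g⁻¹ ∈ sgSubgroup x := inv_mem hg
  have : g⁻¹ ∈ (fun k => k * g) ⁻¹' o := main g⁻¹ hginv _ ho' h1'
  refine ⟨1, ?_, rfl⟩
  have : g⁻¹ * g ∈ o := this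
  rwa [inv_mul_cancel] at this
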